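/- Let d ∈ ℕ, c = (c_1,…,c_d) ∈ [0,∞)^d, let ũ ∈ ℝ^d have all coordinates strictly positive, let μ_1,…,μ_d be Borel measures on U_d := [0,∞)^d∖{0} with ∫_{U_d}‖z‖² μ_ℓ(dz) < ∞ for each ℓ, let v ∈ ℂ^d, and let λ ∈ ℂ, s ∈ ℝ satisfy s > 0 and Re(λ) ≤ s/2. Define C_{v,ℓ} := 2|⟨v,e_ℓ⟩|²c_ℓ + ∫_{U_d}|⟨v,z⟩|² μ_ℓ(dz) and C̃_{v,ℓ} := 2⟨v,e_ℓ⟩²c_ℓ + ∫_{U_d}⟨v,z⟩² μ_ℓ(dz), and let Σ_v be the 2×2 real matrix given by Σ_v := (1/2)Σ_{ℓ=1}^d ũ_ℓ (C_{v,ℓ} I_2 + [[Re C̃_{v,ℓ}, Im C̃_{v,ℓ}],[Im C̃_{v,ℓ}, −Re C̃_{v,ℓ}]]·1_{Im(λ)=0}) if Re(λ) = s/2, and Σ_v := (1/2)Σ_{ℓ=1}^d ũ_ℓ (C_{v,ℓ}/(s−2Re(λ)) I_2 + [[Re(C̃_{v,ℓ}/(s−2λ)), Im(C̃_{v,ℓ}/(s−2λ))],[Im(C̃_{v,ℓ}/(s−2λ)),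 −Re(C̃_{v,ℓ}/(s−2λ))]]) if Re(λ) < s/2. Then Σ_v = 0 if and only if c_ℓ⟨v,e_ℓ⟩ = 0 and μ_ℓ({z ∈ U_d : ⟨v,z⟩ ≠ 0}) = 0 for every ℓ ∈ {1,…,d}. -/

import Mathlib

open MeasureTheory
open scoped ENNReal

/-- The pairing `⟨v,z⟩ = ∑ j, v j * z j` of `v ∈ ℂ^d` with `z ∈ ℝ^d`. -/
noncomputable def pairCV {d : ℕ} (v : Fin d → ℂ) (z : Fin d → ℝ) : ℂ :=
  ∑ j, v j * (z j : ℂ)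

/-- `C_{v,ℓ} = 2|⟨v,e_ℓ⟩|² c_ℓ + ∫ |⟨v,z⟩|² dμ_ℓ`. -/
noncomputable def Cvl {d : ℕ} (c : Fin d → ℝ) (μ : Fin d → Measure (Fin d → ℝ))
    (v : Fin d → ℂ) (ℓ : Fin d) : ℝ :=
  2 * ‖v ℓ‖ ^ 2 * c ℓ + ∫ z, ‖pairCV v z‖ ^ 2 ∂(μ ℓ)

/-- `C̃_{v,ℓ} = 2⟨v,e_ℓ⟩² c_ℓ + ∫ ⟨v,z⟩² dμ_ℓ`. -/
noncomputable def Ctvl {d : ℕ} (c : Fin d → ℝ) (μ : Fin d → Measure (Fin d → ℝ))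
    (v : Fin d → ℂ) (ℓ : Fin d) : ℂ :=
  2 * (v ℓ) ^ 2 * (c ℓ : ℂ) + ∫ z, (pairCV v z) ^ 2 ∂(μ ℓ)

/-- The asymptotic covariance matrix `Σ_v`: for `Re λ = s/2` it is
`(1/2) ∑ ℓ ũ_ℓ (C_{v,ℓ} I₂ + [[Re C̃, Im C̃],[Im C̃, -Re C̃]] 1_{Im λ = 0})`, and for
`Re λ < s/2` (more generally, `Re λ ≠ s/2`) it is
`(1/2) ∑ ℓ ũ_ℓ (C_{v,ℓ}/(s-2Reλ) I₂ + [[Re(C̃/(s-2λ)), Im(C̃/(s-2λ))],[Im(C̃/(s-2λ)), -Re(C̃/(s-2λ))]])`. -/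
noncomputable def SigmaV {d : ℕ} (c : Fin d → ℝ) (utld : Fin d → ℝ)
    (μ : Fin d → Measure (Fin d → ℝ)) (v : Fin d → ℂ) (lam : ℂ) (s : ℝ) :
    Matrix (Fin 2) (Fin 2) ℝ :=
  if lam.re = s / 2 then
    (1 / 2 : ℝ) • ∑ ℓ, utld ℓ •
      (Cvl c μ v ℓ • (1 : Matrix (Fin 2) (Fin 2) ℝ) +
        (if lam.im = 0 then
          !![(Ctvl c μ v ℓ).re, (Ctvl c μ v ℓ).im;
             (Ctvl c μ v ℓ).im, -(Ctvl c μ v ℓ).re]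
         else 0))
  else
    (1 / 2 : ℝ) • ∑ ℓ, utld ℓ •
      ((Cvl c μ v ℓ / (s - 2 * lam.re)) • (1 : Matrix (Fin 2) (Fin 2) ℝ) +
        !![(Ctvl c μ v ℓ / ((s : ℂ) - 2 * lam)).re, (Ctvl c μ v ℓ / ((s : ℂ) - 2 * lam)).im;
           (Ctvl c μ v ℓ / ((s : ℂ) - 2 * lam)).im, -(Ctvl c μ v ℓ / ((s : ℂ) - 2 * lam)).re])

lemma pair_abs_le {d : ℕ} (v : Fin d → ℂ) (z : Fin d → ℝ) :
    ‖pairCV v z‖ ≤ (∑ j, ‖v j‖) * ‖z‖ := by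
  calc ‖pairCV v z‖ ≤ ∑ j, ‖v j * (z j : ℂ)‖ :=
        norm_sum_le _ _
    _ ≤ ∑ j, ‖v j‖ * ‖z‖ := by
        refine Finset.sum_le_sum fun j _ => ?_
        rw [norm_mul, Complex.norm_real]
        exact mul_le_mul_of_nonneg_left
          (norm_le_pi_norm z j) (norm_nonneg _)
    _ = (∑ j, ‖v j‖) * ‖z‖ := by rw [Finset.sum_mul]

lemma pair_meas {d : ℕ} (v : Fin d → ℂ) : Measurable (pairCV v) := by
  unfold pairCV
  exact Finset.measurable_sum _ fun j _ =>
    (Complex.measurable_ofReal.comp (measurable_pi_apply j)).const_mul _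

lemma integrable_pair_sq {d : ℕ} (μ : Measure (Fin d → ℝ)) (v : Fin d → ℂ)
    (hm : ∫⁻ z, (‖z‖₊ : ℝ≥0∞) ^ 2 ∂μ < ⊤) :
    Integrable (fun z => ‖pairCV v z‖ ^ 2) μ := by
  set K : ℝ := ∑ j, ‖v j‖ with hK
  have hKnn : 0 ≤ K := Finset.sum_nonneg fun j _ => norm_nonneg _
  have hg : Integrable (fun z : Fin d → ℝ => K ^ 2 * ‖z‖ ^ 2) μ := by
    refine ⟨(measurable_const.mul (measurable_norm.pow_const 2)).aestronglyMeasurable, ?_⟩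
    rw [hasFiniteIntegral_def]
    have heq : (∫⁻ z, (‖K ^ 2 * ‖z‖ ^ 2‖₊ : ℝ≥0∞) ∂μ)
        = ∫⁻ z, (‖K‖₊ : ℝ≥0∞) ^ 2 * (‖z‖₊ : ℝ≥0∞) ^ 2 ∂μ := by
      refine lintegral_congr fun z => ?_
      rw [nnnorm_mul, nnnorm_pow, nnnorm_pow, nnnorm_norm]
      push_cast
      ring
    rw [show (∫⁻ a, ‖K ^ 2 * ‖a‖ ^ 2‖ₑ ∂μ) = _ from heq, lintegral_const_mul _ (measurable_nnnorm.coe_nnreal_ennreal.pow_const 2)]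
    exact ENNReal.mul_lt_top (ENNReal.pow_lt_top ENNReal.coe_lt_top) hm
  refine hg.mono' ((pair_meas v).norm.pow_const 2).aestronglyMeasurable ?_
  filter_upwards with z
  rw [Real.norm_eq_abs, abs_of_nonneg (by positivity), ← mul_pow]
  exact pow_le_pow_left₀ (norm_nonneg _) (pair_abs_le v z) 2

lemma mat_zero_aux : !![(0:ℝ), 0; 0, 0] = 0 := by
  ext i j
  fin_cases i <;> fin_cases j <;> simp

lemma trace_term (a : ℝ) (x y : ℝ) :
    Matrix.trace (a • (1 : Matrix (Fin 2) (Fin 2) ℝ) + !![x, y; y, -x]) = 2 * a := by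
  rw [Matrix.trace_add, Matrix.trace_smul, Matrix.trace_one, Matrix.trace_fin_two_of]
  simp [smul_eq_mul]
  ring

lemma trace_term' (a : ℝ) (x y : ℝ) (P : Prop) [Decidable P] :
    Matrix.trace (a • (1 : Matrix (Fin 2) (Fin 2) ℝ) +
      (if P then !![x, y; y, -x] else 0)) = 2 * a := by
  by_cases hP : P
  · rw [if_pos hP]; exact trace_term a x y
  · rw [if_neg hP, add_zero, Matrix.trace_smul, Matrix.trace_one]
    simp [smul_eq_mul]
    ring

/-- Let `c ∈ [0,∞)^d`, `ũ ∈ (0,∞)^d`, let `μ_1, …, μ_d` be Borel measures on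
`U_d = [0,∞)^d \ {0}` with finite second moments, `v ∈ ℂ^d`, and `λ ∈ ℂ`, `s > 0` with
`Re λ ≤ s/2`. Then `Σ_v = 0` if and only if for every `ℓ`, `c_ℓ ⟨v,e_ℓ⟩ = 0` and
`μ_ℓ {z ∈ U_d : ⟨v,z⟩ ≠ 0} = 0`. -/
theorem stmt6 (d : ℕ) (c : Fin d → ℝ) (hc : ∀ i, 0 ≤ c i)
    (utld : Fin d → ℝ) (hu : ∀ i, 0 < utld i)
    (μ : Fin d → Measure (Fin d → ℝ))
    (hsupp : ∀ ℓ, μ ℓ {z | ¬ ((∀ i, 0 ≤ z i) ∧ z ≠ 0)} = 0)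
    (hmom : ∀ ℓ, ∫⁻ z, (‖z‖₊ : ℝ≥0∞) ^ 2 ∂(μ ℓ) < ⊤)
    (v : Fin d → ℂ) (lam : ℂ) (s : ℝ) (hs : 0 < s) (hlam : lam.re ≤ s / 2) :
    SigmaV c utld μ v lam s = 0 ↔
      ∀ ℓ, (c ℓ : ℂ) * v ℓ = 0 ∧
        μ ℓ {z | ((∀ i, 0 ≤ z i) ∧ z ≠ 0) ∧ pairCV v z ≠ 0} = 0 := by
  have hint : ∀ ℓ, Integrable (fun z => ‖pairCV v z‖ ^ 2) (μ ℓ) :=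
    fun ℓ => integrable_pair_sq (μ ℓ) v (hmom ℓ)
  have hintnn : ∀ ℓ, 0 ≤ ∫ z, ‖pairCV v z‖ ^ 2 ∂(μ ℓ) :=
    fun ℓ => integral_nonneg fun z => by positivity
  have hCnn : ∀ ℓ, 0 ≤ Cvl c μ v ℓ := fun ℓ =>
    add_nonneg (mul_nonneg (by positivity) (hc ℓ)) (hintnn ℓ)
  -- the measure condition is equivalent to a.e. vanishing of the pairing
  have hmu_iff : ∀ ℓ, μ ℓ {z | ((∀ i, 0 ≤ z i) ∧ z ≠ 0) ∧ pairCV v z ≠ 0} = 0 ↔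
      (∀ᵐ z ∂(μ ℓ), pairCV v z = 0) := by
    intro ℓ
    rw [MeasureTheory.ae_iff]
    constructor
    · intro h
      refine measure_mono_null (fun z hz => ?_) (measure_union_null h (hsupp ℓ))
      by_cases hcond : (∀ i, 0 ≤ z i) ∧ z ≠ 0
      · exact Or.inl ⟨hcond, hz⟩
      · exact Or.inr hcond
    · intro h
      exact measure_mono_null (fun z hz => hz.2) h
  -- Cvl = 0 iff the RHS conditions
  have hC_iff : ∀ ℓ, Cvl c μ v ℓ = 0 ↔
      ((c ℓ : ℂ) * v ℓ = 0 ∧ (∀ᵐ z ∂(μ ℓ), pairCV v z = 0)) := by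
    intro ℓ
    unfold Cvl
    rw [add_eq_zero_iff_of_nonneg (mul_nonneg (by positivity) (hc ℓ)) (hintnn ℓ)]
    have h1 : 2 * ‖v ℓ‖ ^ 2 * c ℓ = 0 ↔ (c ℓ : ℂ) * v ℓ = 0 := by
      constructor
      · intro h
        rcases mul_eq_zero.mp h with h' | h'
        · rcases mul_eq_zero.mp h' with h'' | h''
          · norm_num at h''
          · have : v ℓ = 0 := by
              have := pow_eq_zero_iff (n := 2) (by norm_num) |>.mp h''
              exact norm_eq_zero.mp this
            simp [this]
        · simp [h']
      · intro h
        rcases mul_eq_zero.mp h with h' | h'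
        · have : c ℓ = 0 := by exact_mod_cast h'
          simp [this]
        · simp [h']
    have h2 : (∫ z, ‖pairCV v z‖ ^ 2 ∂(μ ℓ)) = 0 ↔
        (∀ᵐ z ∂(μ ℓ), pairCV v z = 0) := by
      rw [integral_eq_zero_iff_of_nonneg (fun z => by positivity) (hint ℓ)]
      constructor
      · intro h
        filter_upwards [h] with z hz
        have : ‖pairCV v z‖ ^ 2 = 0 := hz
        have := pow_eq_zero_iff (n := 2) (by norm_num) |>.mp this
        exact norm_eq_zero.mp this
      · intro h
        filter_upwards [h] with z hz
        simp [hz]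
    rw [h1, h2]
  -- Ctvl = 0 follows from the RHS conditions
  have hCt0 : ∀ ℓ, (c ℓ : ℂ) * v ℓ = 0 → (∀ᵐ z ∂(μ ℓ), pairCV v z = 0) →
      Ctvl c μ v ℓ = 0 := by
    intro ℓ h1 h2
    unfold Ctvl
    have e1 : 2 * (v ℓ) ^ 2 * (c ℓ : ℂ) = 0 := by
      rcases mul_eq_zero.mp h1 with h' | h' <;> simp [h', pow_two]
    have e2 : (∫ z, (pairCV v z) ^ 2 ∂(μ ℓ)) = 0 := by
      rw [integral_congr_ae (g := fun _ => (0:ℂ)) (by filter_upwards [h2] with z hz; simp [hz])]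
      simp
    rw [e1, e2, add_zero]
  -- Now reduce the matrix statement to : ∀ ℓ, Cvl = 0
  have main : SigmaV c utld μ v lam s = 0 ↔ ∀ ℓ, Cvl c μ v ℓ = 0 := by
    unfold SigmaV
    by_cases hre : lam.re = s / 2
    · rw [if_pos hre]
      constructor
      · intro h
        have ht := congrArg Matrix.trace h
        rw [Matrix.trace_smul, Matrix.trace_sum, Matrix.trace_zero] at ht
        have hsum : ∀ ℓ ∈ Finset.univ, Matrix.trace (utld ℓ •
            (Cvl c μ v ℓ • (1 : Matrix (Fin 2) (Fin 2) ℝ) +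
              (if lam.im = 0 then
                !![(Ctvl c μ v ℓ).re, (Ctvl c μ v ℓ).im;
                   (Ctvl c μ v ℓ).im, -(Ctvl c μ v ℓ).re]
               else 0))) = utld ℓ * (2 * Cvl c μ v ℓ) := by
          intro ℓ _
          rw [Matrix.trace_smul, trace_term', smul_eq_mul]
        rw [Finset.sum_congr rfl hsum, smul_eq_mul] at ht
        have hz : ∑ ℓ, utld ℓ * (2 * Cvl c μ v ℓ) = 0 := by
          have h2 : (1 / 2 : ℝ) ≠ 0 := by norm_num
          exact (mul_eq_zero.mp ht).resolve_left h2
        intro ℓ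
        have := (Finset.sum_eq_zero_iff_of_nonneg (fun ℓ _ =>
          mul_nonneg (hu ℓ).le (mul_nonneg (by norm_num) (hCnn ℓ)))).mp hz ℓ
          (Finset.mem_univ ℓ)
        rcases mul_eq_zero.mp this with h' | h'
        · exact absurd h' (hu ℓ).ne'
        · rcases mul_eq_zero.mp h' with h'' | h''
          · norm_num at h''
          · exact h''
      · intro h
        have : ∀ ℓ ∈ Finset.univ, utld ℓ •
            (Cvl c μ v ℓ • (1 : Matrix (Fin 2) (Fin 2) ℝ) +
              (if lam.im = 0 then
                !![(Ctvl c μ v ℓ).re, (Ctvl c μ v ℓ).im;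
                   (Ctvl c μ v ℓ).im, -(Ctvl c μ v ℓ).re]
               else 0)) = 0 := by
          intro ℓ _
          have hct : Ctvl c μ v ℓ = 0 := by
            obtain ⟨h1, h2⟩ := (hC_iff ℓ).mp (h ℓ)
            exact hCt0 ℓ h1 h2
          rw [h ℓ, hct]
          simp [mat_zero_aux]
        rw [Finset.sum_congr rfl this]
        simp
    · rw [if_neg hre]
      have hlt : lam.re < s / 2 := lt_of_le_of_ne hlam hre
      have htpos : 0 < s - 2 * lam.re := by linarith
      constructor
      · intro h
        have ht := congrArg Matrix.trace h
        rw [Matrix.trace_smul, Matrix.trace_sum, Matrix.trace_zero] at ht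
        have hsum : ∀ ℓ ∈ Finset.univ, Matrix.trace (utld ℓ •
            ((Cvl c μ v ℓ / (s - 2 * lam.re)) • (1 : Matrix (Fin 2) (Fin 2) ℝ) +
              !![(Ctvl c μ v ℓ / ((s : ℂ) - 2 * lam)).re, (Ctvl c μ v ℓ / ((s : ℂ) - 2 * lam)).im;
                 (Ctvl c μ v ℓ / ((s : ℂ) - 2 * lam)).im, -(Ctvl c μ v ℓ / ((s : ℂ) - 2 * lam)).re])) =
            utld ℓ * (2 * (Cvl c μ v ℓ / (s - 2 * lam.re))) := by
          intro ℓ _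
          rw [Matrix.trace_smul, trace_term, smul_eq_mul]
        rw [Finset.sum_congr rfl hsum, smul_eq_mul] at ht
        have hz : ∑ ℓ, utld ℓ * (2 * (Cvl c μ v ℓ / (s - 2 * lam.re))) = 0 := by
          have h2 : (1 / 2 : ℝ) ≠ 0 := by norm_num
          exact (mul_eq_zero.mp ht).resolve_left h2
        intro ℓ
        have := (Finset.sum_eq_zero_iff_of_nonneg (fun ℓ _ =>
          mul_nonneg (hu ℓ).le (mul_nonneg (by norm_num)
            (div_nonneg (hCnn ℓ) htpos.le)))).mp hz ℓ (Finset.mem_univ ℓ)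
        rcases mul_eq_zero.mp this with h' | h'
        · exact absurd h' (hu ℓ).ne'
        · rcases mul_eq_zero.mp h' with h'' | h''
          · norm_num at h''
          · rcases div_eq_zero_iff.mp h'' with h3 | h3
            · exact h3
            · exact absurd h3 htpos.ne'
      · intro h
        have : ∀ ℓ ∈ Finset.univ, utld ℓ •
            ((Cvl c μ v ℓ / (s - 2 * lam.re)) • (1 : Matrix (Fin 2) (Fin 2) ℝ) +
              !![(Ctvl c μ v ℓ / ((s : ℂ) - 2 * lam)).re, (Ctvl c μ v ℓ / ((s : ℂ) - 2 * lam)).im;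
                 (Ctvl c μ v ℓ / ((s : ℂ) - 2 * lam)).im, -(Ctvl c μ v ℓ / ((s : ℂ) - 2 * lam)).re]) = 0 := by
          intro ℓ _
          have hct : Ctvl c μ v ℓ = 0 := by
            obtain ⟨h1, h2⟩ := (hC_iff ℓ).mp (h ℓ)
            exact hCt0 ℓ h1 h2
          rw [h ℓ, hct]
          simp [mat_zero_aux]
        rw [Finset.sum_congr rfl this]
        simp
  rw [main]
  constructor
  · intro h ℓ
    obtain ⟨h1, h2⟩ := (hC_iff ℓ).mp (h ℓ)
    exact ⟨h1, (hmu_iff ℓ).mpr h2⟩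
  · intro h ℓ
    exact (hC_iff ℓ).mpr ⟨(h ℓ).1, (hmu_iff ℓ).mp (h ℓ).2⟩
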